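/- Evaluation at a set of double coset representatives g_1,…,g_n of H\G/H gives an isomorphism of A^H-bimodules from the skew Hecke algebra H_R(G,H,A,α) onto the direct sum ⊕_{i=1}^n A^{H ∩ g_i H g_i⁻¹}, where A^H acts on H_R(G,H,A,α) via a·φ·a' = δ_{H,a} * φ * δ_{H,a'}, and on the summand indexed by g by a·b·a' = a b α_g(a'). -/

import Mathlib

open scoped BigOperators

def SkewHecke.IsInv {R A G : Type*} [CommRing R] [Ring A] [Algebra R A] [Group G]
    (H : Subgroup G) (α : G →* (A ≃ₐ[R] A)) (φ : G ⧸ H → A) : Prop :=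
  ∀ h ∈ H, ∀ g : G, φ (QuotientGroup.mk (h * g)) = α h (φ (QuotientGroup.mk g))

def SkewHecke.IsSection {G : Type*} [Group G] {H : Subgroup G} (s : G ⧸ H → G) : Prop :=
  ∀ c : G ⧸ H, QuotientGroup.mk (s c) = c

noncomputable def SkewHecke.conv {R A G : Type*} [CommRing R] [Ring A] [Algebra R A] [Group G]
    (H : Subgroup G) [Fintype (G ⧸ H)] (α : G →* (A ≃ₐ[R] A))
    (s : G ⧸ H → G) (φ ψ : G ⧸ H → A) : G ⧸ H → A :=
  fun x => ∑ c : G ⧸ H, φ c * α (s c) (ψ ((s c)⁻¹ • x))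

noncomputable def SkewHecke.delta {A G : Type*} [Ring A] [Group G] (H : Subgroup G)
    (a : A) : G ⧸ H → A := by
  classical exact fun x => if x = QuotientGroup.mk (1 : G) then a else 0

namespace SkewHeckeAux


variable {R A G : Type*} [CommRing R] [Ring A] [Algebra R A] [Group G]
  (H : Subgroup G) (α : G →* (A ≃ₐ[R] A))

lemma alpha_mul (g g' : G) (a : A) : α (g * g') a = α g (α g' a) := by
  rw [map_mul]; rfl

lemma alpha_one (a : A) : α 1 a = a := by rw [map_one]; rfl

lemma alpha_inv_cancel (g : G) (a : A) : α g (α g⁻¹ a) = a := by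
  rw [← alpha_mul, mul_inv_cancel, alpha_one]

/-- key well-definedness lemma -/
lemma key {g : G} {b : A}
    (hb : ∀ h ∈ H ⊓ Subgroup.map (MulAut.conj g).toMonoidHom H, α h b = b)
    {h₁ h₂ k₁ k₂ : G} (hh₁ : h₁ ∈ H) (hh₂ : h₂ ∈ H) (hk₁ : k₁ ∈ H) (hk₂ : k₂ ∈ H)
    (hmk : (QuotientGroup.mk (h₁ * g * k₁) : G ⧸ H) = QuotientGroup.mk (h₂ * g * k₂)) :
    α h₁ b = α h₂ b := by
  rw [QuotientGroup.eq] at hmk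
  set k : G := (h₁ * g * k₁)⁻¹ * (h₂ * g * k₂) with hk
  have hkH : k ∈ H := hmk
  have hrel : h₁⁻¹ * h₂ = g * (k₁ * k * k₂⁻¹) * g⁻¹ := by
    have : h₂ * g * k₂ = h₁ * g * k₁ * k := by rw [hk]; group
    have := congrArg (fun z => h₁⁻¹ * z * (g * k₂)⁻¹) this
    calc h₁⁻¹ * h₂ = h₁⁻¹ * (h₂ * g * k₂) * (g * k₂)⁻¹ := by group
      _ = h₁⁻¹ * (h₁ * g * k₁ * k) * (g * k₂)⁻¹ := by rw [this]
      _ = g * (k₁ * k * k₂⁻¹) * g⁻¹ := by group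
  have hmem : h₁⁻¹ * h₂ ∈ H ⊓ Subgroup.map (MulAut.conj g).toMonoidHom H := by
    constructor
    · exact H.mul_mem (H.inv_mem hh₁) hh₂
    · refine ⟨k₁ * k * k₂⁻¹, H.mul_mem (H.mul_mem hk₁ hkH) (H.inv_mem hk₂), ?_⟩
      simp [MulAut.conj_apply, hrel]
  have := hb _ hmem
  calc α h₁ b = α h₁ (α (h₁⁻¹ * h₂) b) := by rw [this]
    _ = α h₂ b := by rw [← alpha_mul]; group


section Conv
variable [Fintype (G ⧸ H)] {s : G ⧸ H → G}

open Classical in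
lemma delta_apply (a : A) (y : G ⧸ H) :
    SkewHecke.delta H a y = if y = QuotientGroup.mk (1 : G) then a else 0 := by
  unfold SkewHecke.delta
  congr

lemma conv_delta_right (hs : SkewHecke.IsSection s) (φ : G ⧸ H → A) (a' : A) (x : G ⧸ H) :
    SkewHecke.conv H α s φ (SkewHecke.delta H a') x = φ x * α (s x) a' := by
  classical
  obtain ⟨g, rfl⟩ := QuotientGroup.mk_surjective x
  unfold SkewHecke.conv
  rw [Finset.sum_eq_single_of_mem (QuotientGroup.mk g) (Finset.mem_univ _)]
  · have hsx : (s (QuotientGroup.mk g : G ⧸ H))⁻¹ * g ∈ H := by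
      rw [← QuotientGroup.eq, hs]
    have h1 : (s (QuotientGroup.mk g : G ⧸ H))⁻¹ • (QuotientGroup.mk g : G ⧸ H)
        = QuotientGroup.mk (1 : G) := by
      rw [MulAction.Quotient.smul_mk, smul_eq_mul, QuotientGroup.eq]
      simpa [mul_inv_rev] using H.inv_mem hsx
    rw [h1, delta_apply, if_pos rfl]
  · intro c _ hc
    have h2 : (s c)⁻¹ • (QuotientGroup.mk g : G ⧸ H) ≠ QuotientGroup.mk (1 : G) := by
      intro h
      apply hc
      have h3 := congrArg (fun z => s c • z) h
      simp only [smul_inv_smul] at h3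
      rw [MulAction.Quotient.smul_mk] at h3
      simp only [smul_eq_mul, mul_one] at h3
      rw [h3, hs c]
    rw [delta_apply, if_neg h2, map_zero, mul_zero]

lemma conv_delta_left (hs : SkewHecke.IsSection s) (ψ : G ⧸ H → A) (hψ : SkewHecke.IsInv H α ψ) (a : A) (x : G ⧸ H) :
    SkewHecke.conv H α s (SkewHecke.delta H a) ψ x = a * ψ x := by
  classical
  obtain ⟨g, rfl⟩ := QuotientGroup.mk_surjective x
  unfold SkewHecke.conv
  rw [Finset.sum_eq_single_of_mem (QuotientGroup.mk (1 : G)) (Finset.mem_univ _)]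
  · set h0 : G := s (QuotientGroup.mk (1 : G)) with hh0
    have h0H : h0⁻¹ ∈ H := by
      have h4 := hs (QuotientGroup.mk (1 : G))
      rw [QuotientGroup.eq] at h4
      simpa using h4
    rw [delta_apply, if_pos rfl, MulAction.Quotient.smul_mk, smul_eq_mul,
      hψ h0⁻¹ h0H g, alpha_inv_cancel]
  · intro c _ hc
    rw [delta_apply, if_neg hc, zero_mul]

lemma conv_delta_right_isInv (hs : SkewHecke.IsSection s) (φ : G ⧸ H → A) (hφ : SkewHecke.IsInv H α φ) (a' : A)
    (ha' : ∀ h ∈ H, α h a' = a') :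
    SkewHecke.IsInv H α (SkewHecke.conv H α s φ (SkewHecke.delta H a')) := by
  intro h hh g
  rw [conv_delta_right H α hs, conv_delta_right H α hs, map_mul, hφ h hh g]
  congr 1
  have hmk : (QuotientGroup.mk (h * s (QuotientGroup.mk g)) : G ⧸ H)
      = QuotientGroup.mk (h * g) := by
    have := congrArg (fun z => h • z) (hs (QuotientGroup.mk g : G ⧸ H))
    simpa [MulAction.Quotient.smul_mk] using this
  have hu : (h * s (QuotientGroup.mk g : G ⧸ H))⁻¹ * s (QuotientGroup.mk (h * g) : G ⧸ H) ∈ H := by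
    rw [← QuotientGroup.eq, hmk, hs]
  have h6 : s (QuotientGroup.mk (h * g) : G ⧸ H)
      = h * s (QuotientGroup.mk g : G ⧸ H)
        * ((h * s (QuotientGroup.mk g : G ⧸ H))⁻¹ * s (QuotientGroup.mk (h * g) : G ⧸ H)) := by
    group
  rw [h6, alpha_mul, ha' _ hu, alpha_mul]

end Conv

end SkewHeckeAux

/-- Evaluation at a set of double coset representatives is an isomorphism of
`A^H`-bimodules from the skew Hecke algebra onto `⊕_{HgH} A^{H ∩ gHg⁻¹}`, where `A^H` acts
on the skew Hecke algebra by `a·φ·a' = δ_{H,a} * φ * δ_{H,a'}` and on the summand indexed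
by `g` by `a·b·a' = a b α_g(a')`. -/
theorem skewHecke_double_coset_decomposition {R A G : Type*} [CommRing R] [Ring A]
    [Algebra R A] [Group G] (H : Subgroup G) [Fintype (G ⧸ H)]
    (α : G →* (A ≃ₐ[R] A)) (s : G ⧸ H → G) (hs : SkewHecke.IsSection s)
    -- a set of representatives of the double cosets of `H` in `G`
    (r : DoubleCoset.Quotient (H : Set G) (H : Set G) → G)
    (hr : ∀ q, DoubleCoset.mk H H (r q) = q) :
    let E : (G ⧸ H → A) → (DoubleCoset.Quotient (H : Set G) (H : Set G) → A) :=
      fun φ q => φ (QuotientGroup.mk (r q))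
    -- `E` is a bijection onto the product of the fixed-point modules `A^{H ∩ gHg⁻¹}`
    Set.BijOn E {φ | SkewHecke.IsInv H α φ}
      {f | ∀ q, ∀ h ∈ H ⊓ Subgroup.map (MulAut.conj (r q)).toMonoidHom H,
        α h (f q) = f q} ∧
    -- `E` is `R`-linear
    (∀ φ ψ : G ⧸ H → A, E (φ + ψ) = E φ + E ψ) ∧
    (∀ (c : R) (φ : G ⧸ H → A), E (c • φ) = c • E φ) ∧
    -- `E` intertwines the `A^H`-bimodule structures
    (∀ a a' : A, (∀ h ∈ H, α h a = a) → (∀ h ∈ H, α h a' = a') →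
      ∀ φ : G ⧸ H → A, SkewHecke.IsInv H α φ →
        E (SkewHecke.conv H α s (SkewHecke.delta H a)
            (SkewHecke.conv H α s φ (SkewHecke.delta H a'))) =
          fun q => a * E φ q * α (r q) a') := by
  classical
  intro E
  open SkewHeckeAux in
  refine ⟨⟨?_, ?_, ?_⟩, ?_, ?_, ?_⟩
  · -- MapsTo
    intro φ hφ q h hh
    obtain ⟨k, hkH, hk⟩ := Subgroup.mem_map.mp hh.2
    have hk' : h * r q = r q * k := by
      have : r q * k * (r q)⁻¹ = h := hk
      rw [← this]; group
    show α h (φ (QuotientGroup.mk (r q))) = φ (QuotientGroup.mk (r q))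
    rw [← hφ h hh.1 (r q), hk', QuotientGroup.mk_mul_of_mem _ hkH]
  · -- InjOn
    intro φ hφ ψ hψ hE
    funext x
    have hx : QuotientGroup.mk (s x) = x := hs x
    set q := DoubleCoset.mk H H (s x) with hq
    obtain ⟨h, hh, k, hk, hgx⟩ := (DoubleCoset.eq H H (r q) (s x)).mp (hr q)
    have e1 : ∀ χ : G ⧸ H → A, SkewHecke.IsInv H α χ →
        χ x = α h (χ (QuotientGroup.mk (r q))) := by
      intro χ hχ
      conv_lhs => rw [← hx]
      rw [hgx, mul_assoc, hχ h hh (r q * k), QuotientGroup.mk_mul_of_mem _ hk]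
    have h2 : φ (QuotientGroup.mk (r q)) = ψ (QuotientGroup.mk (r q)) := congrFun hE q
    rw [e1 φ hφ, e1 ψ hψ, h2]
  · -- SurjOn
    intro f hf
    have hf' : ∀ q, ∀ h ∈ H ⊓ Subgroup.map (MulAut.conj (r q)).toMonoidHom H,
        α h (f q) = f q := hf
    have hdec : ∀ x : G ⧸ H, ∃ h k : G, h ∈ H ∧ k ∈ H ∧
        s x = h * r (DoubleCoset.mk H H (s x)) * k := by
      intro x
      obtain ⟨h, hh, k, hk, he⟩ := (DoubleCoset.eq H H (r (DoubleCoset.mk H H (s x))) (s x)).mp (hr _)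
      exact ⟨h, k, hh, hk, he⟩
    choose hx kx hhx hkx hsx using hdec
    refine ⟨fun x => α (hx x) (f (DoubleCoset.mk H H (s x))), ?_, ?_⟩
    · -- invariance
      intro h hh g
      set x : G ⧸ H := QuotientGroup.mk g with hxdef
      set y : G ⧸ H := QuotientGroup.mk (h * g) with hydef
      have wx : (s x)⁻¹ * g ∈ H := by rw [← QuotientGroup.eq, hs]
      have wy : (s y)⁻¹ * (h * g) ∈ H := by rw [← QuotientGroup.eq, hs]
      have hu : (h * s x)⁻¹ * s y ∈ H := by
        have : (h * s x)⁻¹ * s y = ((s x)⁻¹ * g) * ((s y)⁻¹ * (h * g))⁻¹ := by group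
        rw [this]; exact H.mul_mem wx (H.inv_mem wy)
      have hsy : s y = h * s x * ((h * s x)⁻¹ * s y) := by group
      have hqyx : DoubleCoset.mk H H (s y) = DoubleCoset.mk H H (s x) := by
        symm
        rw [DoubleCoset.eq]
        exact ⟨h, hh, (h * s x)⁻¹ * s y, hu, hsy⟩
      show α (hx y) (f (DoubleCoset.mk H H (s y))) = α h (α (hx x) (f (DoubleCoset.mk H H (s x))))
      rw [hqyx, ← alpha_mul]
      have hsy' : s y = hx y * r (DoubleCoset.mk H H (s x)) * kx y := by
        have := hsx y; rwa [hqyx] at this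
      refine key H α (hf' (DoubleCoset.mk H H (s x))) (hhx y) (H.mul_mem hh (hhx x)) (hkx y)
        (hkx x) ?_
      rw [← hsy', hs y]
      have h9 : h * hx x * r (DoubleCoset.mk H H (s x)) * kx x = h * s x := by
        conv_rhs => rw [hsx x]
        group
      rw [h9, hydef, QuotientGroup.eq]
      have h8 : (h * g)⁻¹ * (h * s x) = ((s x)⁻¹ * g)⁻¹ := by group
      rw [h8]
      exact H.inv_mem wx
    · -- E of it equals f
      funext q0
      set x0 : G ⧸ H := QuotientGroup.mk (r q0) with hx0def
      show α (hx x0) (f (DoubleCoset.mk H H (s x0))) = f q0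
      have w0 : (s x0)⁻¹ * r q0 ∈ H := by rw [← QuotientGroup.eq, hs]
      have hq0 : DoubleCoset.mk H H (s x0) = q0 := by
        rw [← hr q0]
        symm
        rw [DoubleCoset.eq]
        exact ⟨1, H.one_mem, ((s x0)⁻¹ * r q0)⁻¹, H.inv_mem w0, by group⟩
      rw [hq0]
      have hsx0 : s x0 = hx x0 * r q0 * kx x0 := by
        have := hsx x0; rwa [hq0] at this
      have := key H α (hf' q0) (hhx x0) H.one_mem (hkx x0) H.one_mem
        (h₁ := hx x0) (h₂ := 1) (k₁ := kx x0) (k₂ := 1) ?_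
      · rw [this, alpha_one]
      · rw [← hsx0, hs x0, hx0def, one_mul, mul_one]
  · intro φ ψ; rfl
  · intro c φ; rfl
  · intro a a' ha ha' φ hφ
    funext q
    have hψinv := conv_delta_right_isInv H α hs φ hφ a' ha'
    show SkewHecke.conv H α s (SkewHecke.delta H a)
        (SkewHecke.conv H α s φ (SkewHecke.delta H a')) (QuotientGroup.mk (r q))
      = a * φ (QuotientGroup.mk (r q)) * α (r q) a'
    rw [conv_delta_left H α hs _ hψinv, conv_delta_right H α hs, ← mul_assoc]
    congr 1
    have hu : (r q)⁻¹ * s (QuotientGroup.mk (r q) : G ⧸ H) ∈ H := by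
      rw [← QuotientGroup.eq, hs]
    have h7 : s (QuotientGroup.mk (r q) : G ⧸ H)
        = r q * ((r q)⁻¹ * s (QuotientGroup.mk (r q) : G ⧸ H)) := by group
    rw [h7, alpha_mul, ha' _ hu]
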